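/- Let n ≥ 2 be an integer and let r ∈ C²([0,∞)) satisfy r''(t)/(1 − r'(t)²) + ((n−1)/t)·r'(t) = 1 for all t ∈ (0,∞), with r(0) = 0, r'(0) = 0, 0 < r'(t) < 1 for all t ∈ (0,∞), and 0 < r''(t) ≤ 1 for all t ∈ [0,∞). Then t/√(n² + t²) ≤ r'(t) < 1 for all t ∈ [0,∞). -/

import Mathlib

open Set Filter Topology

/-- If `G` is continuous on `[0,∞)`, `G 0 = 0`, differentiable on `(0,∞)`,
and `G' t > 0` whenever `G t < 0`, then `G ≥ 0` on `[0,∞)`. -/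
lemma aux_nonneg (G G' : ℝ → ℝ) (hc : ContinuousOn G (Set.Ici 0))
    (h0 : G 0 = 0) (hd : ∀ t > (0:ℝ), HasDerivAt G (G' t) t)
    (hpos : ∀ t > (0:ℝ), G t < 0 → 0 < G' t) :
    ∀ t ≥ (0:ℝ), 0 ≤ G t := by
  intro t₀ ht₀
  by_contra hneg
  push_neg at hneg
  have ht₀0 : t₀ ≠ 0 := by
    intro h; rw [h, h0] at hneg; exact absurd hneg (lt_irrefl 0)
  have ht₀pos : 0 < t₀ := lt_of_le_of_ne ht₀ (Ne.symm ht₀0)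
  set S : Set ℝ := Set.Icc 0 t₀ ∩ G ⁻¹' Set.Ici 0 with hS
  have h0S : (0:ℝ) ∈ S := ⟨⟨le_refl 0, ht₀⟩, by simp [h0]⟩
  have hSsub : S ⊆ Set.Icc 0 t₀ := Set.inter_subset_left
  have hSclosed : IsClosed S :=
    (hc.mono (Set.Icc_subset_Ici_self)).preimage_isClosed_of_isClosed
      isClosed_Icc isClosed_Ici
  have hScompact : IsCompact S :=
    isCompact_Icc.of_isClosed_subset hSclosed hSsub
  set s := sSup S with hs
  have hsS : s ∈ S := hScompact.sSup_mem ⟨0, h0S⟩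
  have hs0 : 0 ≤ s := hsS.1.1
  have hst₀ : s ≤ t₀ := hsS.1.2
  have hGs : 0 ≤ G s := hsS.2
  have hslt : s < t₀ := by
    rcases lt_or_eq_of_le hst₀ with h | h
    · exact h
    · exact absurd (h ▸ hGs) (not_le.mpr hneg)
  have hbdd : BddAbove S := (isCompact_Icc (a := (0:ℝ)) (b := t₀)).bddAbove.mono hSsub
  have hnotin : ∀ x ∈ Set.Ioo s t₀, G x < 0 := by
    intro x hx
    by_contra hx'
    push_neg at hx'
    have : x ∈ S := ⟨⟨hs0.trans hx.1.le, hx.2.le⟩, hx'⟩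
    exact absurd (le_csSup hbdd this) (not_le.mpr hx.1)
  have hmono : StrictMonoOn G (Set.Icc s t₀) := by
    apply strictMonoOn_of_deriv_pos (convex_Icc s t₀)
    · exact hc.mono (fun x hx => le_trans hs0 hx.1)
    · intro x hx
      rw [interior_Icc] at hx
      have hx0 : 0 < x := lt_of_le_of_lt hs0 hx.1
      have := hpos x hx0 (hnotin x hx)
      rwa [(hd x hx0).deriv]
  have := hmono ⟨le_refl s, hslt.le⟩ ⟨hslt.le, le_refl t₀⟩ hslt
  linarith

theorem stmt_0 (n : ℕ) (hn : 2 ≤ n) (r r' r'' : ℝ → ℝ)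
    (hr' : ∀ t ∈ Set.Ici (0:ℝ), HasDerivWithinAt r (r' t) (Set.Ici 0) t)
    (hr'' : ∀ t ∈ Set.Ici (0:ℝ), HasDerivWithinAt r' (r'' t) (Set.Ici 0) t)
    (hcont : ContinuousOn r'' (Set.Ici 0))
    (heq : ∀ t ∈ Set.Ioi (0:ℝ),
      r'' t / (1 - (r' t) ^ 2) + ((n : ℝ) - 1) / t * r' t = 1)
    (h0 : r 0 = 0) (h0' : r' 0 = 0)
    (hlt : ∀ t ∈ Set.Ioi (0:ℝ), 0 < r' t ∧ r' t < 1)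
    (hconv : ∀ t ∈ Set.Ici (0:ℝ), 0 < r'' t ∧ r'' t ≤ 1) :
    ∀ t ∈ Set.Ici (0:ℝ),
      t / Real.sqrt ((n : ℝ) ^ 2 + t ^ 2) ≤ r' t ∧ r' t < 1 := by
  have hn0 : (0:ℝ) < n := by positivity
  have hq : ∀ t : ℝ, (0:ℝ) < (n:ℝ)^2 + t^2 := by intro t; positivity
  set φ : ℝ → ℝ := fun t => t / Real.sqrt ((n:ℝ)^2 + t^2) with hφ
  set φ' : ℝ → ℝ := fun t =>
    (n:ℝ)^2 / (((n:ℝ)^2 + t^2) * Real.sqrt ((n:ℝ)^2 + t^2)) with hφ'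
  have hsq : ∀ t : ℝ, 0 < Real.sqrt ((n:ℝ)^2 + t^2) :=
    fun t => Real.sqrt_pos.mpr (hq t)
  have hsqsq : ∀ t : ℝ, Real.sqrt ((n:ℝ)^2 + t^2) ^ 2 = (n:ℝ)^2 + t^2 :=
    fun t => Real.sq_sqrt (hq t).le
  have hsqn : ∀ t : ℝ, (n:ℝ) ≤ Real.sqrt ((n:ℝ)^2 + t^2) := by
    intro t
    rw [show (n:ℝ)^2 + t^2 = (n:ℝ)*(n:ℝ) + t^2 by ring]
    calc (n:ℝ) = Real.sqrt ((n:ℝ)*(n:ℝ)) := (Real.sqrt_mul_self hn0.le).symm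
    _ ≤ _ := Real.sqrt_le_sqrt (by nlinarith)
  have hφd : ∀ t : ℝ, HasDerivAt φ (φ' t) t := by
    intro t
    have h1 : HasDerivAt (fun t : ℝ => (n:ℝ)^2 + t^2) (2*t) t := by
      simpa using ((hasDerivAt_pow 2 t).const_add ((n:ℝ)^2))
    have h2 : HasDerivAt (fun t : ℝ => Real.sqrt ((n:ℝ)^2 + t^2))
        (2*t / (2 * Real.sqrt ((n:ℝ)^2 + t^2))) t := h1.sqrt (hq t).ne'
    have h3 : HasDerivAt φ _ t := (hasDerivAt_id t).div h2 (hsq t).ne'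
    convert h3 using 1
    have h4 := hsq t
    have h5 := hsqsq t
    simp only [hφ', id]
    field_simp
    linear_combination (- t^2) * h5
  have hr'c : ContinuousOn r' (Set.Ici 0) :=
    fun t ht => (hr'' t ht).continuousWithinAt
  have hφc : Continuous φ := by
    apply Continuous.div continuous_id
    · exact (continuous_const.add (continuous_pow 2)).sqrt
    · exact fun t => (hsq t).ne'
  -- key: G = r' - φ is nonneg on Ici 0
  have key : ∀ t ≥ (0:ℝ), 0 ≤ r' t - φ t := by
    apply aux_nonneg _ (fun t => r'' t - φ' t)
    · exact hr'c.sub hφc.continuousOn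
    · simp [hφ, h0']
    · intro t ht
      exact ((hr'' t ht.le).hasDerivAt (Ici_mem_nhds ht)).sub (hφd t)
    · intro t ht hGneg
      have hrlt : r' t < φ t := by linarith
      obtain ⟨hr0, hr1⟩ := hlt t ht
      have hB : 0 < 1 - r' t ^ 2 := by nlinarith
      have heqt := heq t ht
      have hr''eq : r'' t = (1 - ((n:ℝ)-1)/t * r' t) * (1 - r' t ^ 2) := by
        field_simp at heqt ⊢
        nlinarith [heqt]
      set sq := Real.sqrt ((n:ℝ)^2 + t^2) with hsqdef
      have hsqpos := hsq t
      have hsq2 := hsqsq t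
      have hnsq := hsqn t
      have hφt : φ t = t / sq := rfl
      -- r' t < t / sq
      have hφlt1 : φ t < 1 := by
        rw [hφt, div_lt_one hsqpos]
        nlinarith
      have hA : 1/sq < 1 - ((n:ℝ)-1)/t * r' t := by
        have h1 : ((n:ℝ)-1)/t * r' t < ((n:ℝ)-1)/t * (t/sq) := by
          apply mul_lt_mul_of_pos_left (hrlt.trans_eq hφt) 
          apply div_pos _ ht
          have : (2:ℝ) ≤ n := by exact_mod_cast hn
          linarith
        have h2 : ((n:ℝ)-1)/t * (t/sq) = ((n:ℝ)-1)/sq := by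
          field_simp
        rw [h2] at h1
        have h3 : ((n:ℝ)-1)/sq ≤ 1 - 1/sq := by
          rw [div_le_iff₀ hsqpos]
          have : (1:ℝ) - 1/sq = (sq - 1)/sq := by have hsq0 : sq ≠ 0 := hsqpos.ne'; field_simp
          rw [this, div_mul_cancel₀ _ hsqpos.ne']
          linarith
        linarith
      have hBlow : (n:ℝ)^2 / ((n:ℝ)^2 + t^2) < 1 - r' t ^ 2 := by
        have h1 : φ t ^ 2 = t^2 / ((n:ℝ)^2 + t^2) := by
          rw [hφt, div_pow, hsq2]
        have h2 : r' t ^ 2 < φ t ^ 2 := by nlinarith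
        rw [h1] at h2
        have : (n:ℝ)^2 / ((n:ℝ)^2+t^2) = 1 - t^2/((n:ℝ)^2+t^2) := by
          field_simp
          ring
        rw [this]
        linarith
      have hφ'val : φ' t = (n:ℝ)^2 / (((n:ℝ)^2 + t^2) * sq) := rfl
      have hsqinv : 0 < 1/sq := by positivity
      have hfin : φ' t < r'' t := by
        rw [hr''eq, hφ'val]
        have : (n:ℝ)^2 / (((n:ℝ)^2 + t^2) * sq)
            = (1/sq) * ((n:ℝ)^2 / ((n:ℝ)^2 + t^2)) := by
          field_simp
        rw [this]
        have hb0 : (0:ℝ) < (n:ℝ)^2 / ((n:ℝ)^2 + t^2) := by positivity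
        calc (1/sq) * ((n:ℝ)^2 / ((n:ℝ)^2 + t^2))
            < (1 - ((n:ℝ)-1)/t * r' t) * ((n:ℝ)^2 / ((n:ℝ)^2 + t^2)) := by
              apply mul_lt_mul_of_pos_right hA hb0
          _ < (1 - ((n:ℝ)-1)/t * r' t) * (1 - r' t ^ 2) := by
              apply mul_lt_mul_of_pos_left hBlow
              linarith
      linarith
  intro t ht
  rcases eq_or_lt_of_le (show (0:ℝ) ≤ t from ht) with h | h
  · constructor
    · have : φ t = 0 := by rw [← h]; simp [hφ]
      have := key t ht
      linarith [key t ht, this]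
    · rw [← h, h0']; norm_num
  · exact ⟨by linarith [key t ht], (hlt t h).2⟩
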